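/- arXiv:2408.06269 — 5 statements merged into one kernel-verified Lean document; each statement's English description precedes it below -/
import Mathlib

section
/- Fix ξ > 0 and n ∈ ℕ with n > 2/ξ² - 1. Then the likelihood ratio ℓ_n satisfies: (i) ℓ_n(r) → 0 as r → ∞; (ii) ℓ_n is strictly increasing on [0, r_max] and strictly decreasing on [r_max, ∞), where r_max = √(ξ²(n+1)/2 - 1); and (iii) its maximum value is η_max(n) = ℓ_n(r_max) = e^{1/ξ²} · ( (n+1)ξ²/(2e) )^{(n+1)/2} · η₀(n). -/
open Real MeasureTheory Filter

/-- Isotropic Gaussian density on ℝⁿ: `π^{-n/2} ξ^{-n} exp(-‖y‖²/ξ²)`. -/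
noncomputable def pG (ξ : ℝ) (n : ℕ) (y : EuclideanSpace ℝ (Fin n)) : ℝ :=
  (π ^ ((n : ℝ) / 2) * ξ ^ n)⁻¹ * Real.exp (-‖y‖ ^ 2 / ξ ^ 2)

/-- Isotropic Cauchy density on ℝⁿ: `Γ((n+1)/2) π^{-(n+1)/2} (1+‖y‖²)^{-(n+1)/2}`. -/
noncomputable def pC (n : ℕ) (y : EuclideanSpace ℝ (Fin n)) : ℝ :=
  Real.Gamma (((n : ℝ) + 1) / 2) / π ^ (((n : ℝ) + 1) / 2) *
    (1 + ‖y‖ ^ 2) ^ (-(((n : ℝ) + 1) / 2))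

/-- Likelihood ratio `ℓ_n(r) = (√π/(Γ((n+1)/2) ξⁿ)) e^{-r²/ξ²} (1+r²)^{(n+1)/2}`. -/
noncomputable def ell (ξ : ℝ) (n : ℕ) (r : ℝ) : ℝ :=
  Real.sqrt π / (Real.Gamma (((n : ℝ) + 1) / 2) * ξ ^ n) *
    Real.exp (-r ^ 2 / ξ ^ 2) * (1 + r ^ 2) ^ (((n : ℝ) + 1) / 2)

/-- `η₀(n) = ℓ_n(0)`. -/
noncomputable def eta0 (ξ : ℝ) (n : ℕ) : ℝ := ell ξ n 0

/-- `η_max(n) = sup_{r ≥ 0} ℓ_n(r)`. -/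
noncomputable def etaMax (ξ : ℝ) (n : ℕ) : ℝ := sSup (ell ξ n '' Set.Ici 0)

/-- Miss probability: integral of the Cauchy density over the annulus `a ≤ ‖y‖ ≤ b`. -/
noncomputable def PM (n : ℕ) (a b : ℝ) : ℝ :=
  ∫ y in {y : EuclideanSpace ℝ (Fin n) | a ≤ ‖y‖ ∧ ‖y‖ ≤ b}, pC n y

/-- False-alarm probability: 1 minus the Gaussian mass of the annulus `a ≤ ‖y‖ ≤ b`. -/
noncomputable def PF (ξ : ℝ) (n : ℕ) (a b : ℝ) : ℝ :=
  1 - ∫ y in {y : EuclideanSpace ℝ (Fin n) | a ≤ ‖y‖ ∧ ‖y‖ ≤ b}, pG ξ n y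

/-- The Gaussian Q-function `Q(x) = ∫_x^∞ (2π)^{-1/2} e^{-t²/2} dt`. -/
noncomputable def Qfun (x : ℝ) : ℝ :=
  ∫ t in Set.Ici x, (Real.sqrt (2 * π))⁻¹ * Real.exp (-t ^ 2 / 2)

/-- For `n > 2/ξ² - 1`: (i) `ℓ_n(r) → 0` as `r → ∞`; (ii) `ℓ_n` is strictly
increasing on `[0, r_max]` and strictly decreasing on `[r_max, ∞)` where
`r_max = √(ξ²(n+1)/2 - 1)`; (iii) `η_max(n) = ℓ_n(r_max) = e^{1/ξ²}((n+1)ξ²/(2e))^{(n+1)/2}·η₀(n)`. -/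
theorem likelihood_ratio_shape
    (ξ : ℝ) (n : ℕ) (hξ : 0 < ξ) (hn : 2 / ξ ^ 2 - 1 < (n : ℝ)) :
    Tendsto (ell ξ n) atTop (nhds 0) ∧
    StrictMonoOn (ell ξ n) (Set.Icc 0 (Real.sqrt (ξ ^ 2 * ((n : ℝ) + 1) / 2 - 1))) ∧
    StrictAntiOn (ell ξ n) (Set.Ici (Real.sqrt (ξ ^ 2 * ((n : ℝ) + 1) / 2 - 1))) ∧
    etaMax ξ n = ell ξ n (Real.sqrt (ξ ^ 2 * ((n : ℝ) + 1) / 2 - 1)) ∧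
    etaMax ξ n = Real.exp (1 / ξ ^ 2) *
      (((n : ℝ) + 1) * ξ ^ 2 / (2 * Real.exp 1)) ^ (((n : ℝ) + 1) / 2) * eta0 ξ n := by
  have hξ2 : (0:ℝ) < ξ ^ 2 := by positivity
  set α : ℝ := ((n : ℝ) + 1) / 2 with hα
  have hαpos : 0 < α := by positivity
  set C : ℝ := Real.sqrt π / (Real.Gamma α * ξ ^ n) with hC
  have hCpos : 0 < C := by
    apply div_pos (Real.sqrt_pos.mpr Real.pi_pos)
    exact mul_pos (Real.Gamma_pos_of_pos hαpos) (pow_pos hξ n)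
  have hone : ∀ r : ℝ, (0:ℝ) < 1 + r ^ 2 := fun r => by positivity
  set g : ℝ → ℝ := fun r => α * Real.log (1 + r ^ 2) - r ^ 2 / ξ ^ 2 with hg
  have hell : ∀ r : ℝ, ell ξ n r = C * Real.exp (g r) := by
    intro r
    rw [ell, ← hα, ← hC, hg, Real.rpow_def_of_pos (hone r)]
    rw [mul_assoc, ← Real.exp_add]
    congr 2
    ring
  -- the set argument to sqrt
  set s : ℝ := ξ ^ 2 * ((n : ℝ) + 1) / 2 - 1 with hsdef
  have hs : 0 < s := by
    have key : 2 / ξ ^ 2 * ξ ^ 2 = 2 := div_mul_cancel₀ _ hξ2.ne'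
    rw [hsdef]; nlinarith [key, hξ2, hn]
  set rmax : ℝ := Real.sqrt s with hrmaxdef
  have hrmaxpos : 0 < rmax := Real.sqrt_pos.mpr hs
  have hsq : rmax ^ 2 = s := Real.sq_sqrt hs.le
  have hsum : 1 + s = ξ ^ 2 * α := by rw [hsdef, hα]; ring
  -- derivative of g
  have hgd : ∀ r : ℝ, HasDerivAt g (2 * r * (α / (1 + r ^ 2) - 1 / ξ ^ 2)) r := by
    intro r
    have hin : HasDerivAt (fun r : ℝ => 1 + r ^ 2) (2 * r) r := by
      simpa using (hasDerivAt_pow 2 r).const_add 1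
    have hlog : HasDerivAt (fun r : ℝ => Real.log (1 + r ^ 2)) ((1 + r ^ 2)⁻¹ * (2 * r)) r :=
      by have := (Real.hasDerivAt_log (hone r).ne').comp r hin; exact this
    have h2 : HasDerivAt (fun r : ℝ => r ^ 2 / ξ ^ 2) (2 * r / ξ ^ 2) r := by
      simpa using (hasDerivAt_pow 2 r).div_const (ξ ^ 2)
    have h3 := (hlog.const_mul α).sub h2
    rw [hg]
    refine h3.congr_deriv ?_
    ring
  have hgc : Continuous g := by
    rw [hg]
    exact (continuous_const.mul ((continuous_const.add (continuous_pow 2)).log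
      (fun r => (hone r).ne'))).sub ((continuous_pow 2).div_const _)
  have hgmono : StrictMonoOn g (Set.Icc 0 rmax) := by
    apply strictMonoOn_of_deriv_pos (convex_Icc _ _) hgc.continuousOn
    intro x hx
    rw [interior_Icc] at hx
    rw [(hgd x).deriv]
    have hx2 : x ^ 2 < rmax ^ 2 := pow_lt_pow_left₀ hx.2 hx.1.le two_ne_zero
    rw [hsq] at hx2
    have hx1 : 1 + x ^ 2 < ξ ^ 2 * α := by linarith [hsum]
    have hlt : 1 / ξ ^ 2 < α / (1 + x ^ 2) := by
      rw [div_lt_div_iff₀ hξ2 (hone x)]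
      nlinarith
    exact mul_pos (by linarith [hx.1]) (by linarith)
  have hganti : StrictAntiOn g (Set.Ici rmax) := by
    apply strictAntiOn_of_deriv_neg (convex_Ici _) hgc.continuousOn
    intro x hx
    rw [interior_Ici] at hx
    rw [(hgd x).deriv]
    have hx2 : rmax ^ 2 < x ^ 2 := pow_lt_pow_left₀ hx hrmaxpos.le two_ne_zero
    rw [hsq] at hx2
    have hx1 : ξ ^ 2 * α < 1 + x ^ 2 := by linarith [hsum]
    have hlt : α / (1 + x ^ 2) < 1 / ξ ^ 2 := by
      rw [div_lt_div_iff₀ (hone x) hξ2]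
      nlinarith
    have hxpos : 0 < x := lt_trans hrmaxpos hx
    exact mul_neg_of_pos_of_neg (by linarith) (by linarith)
  have hellmono : StrictMonoOn (ell ξ n) (Set.Icc 0 rmax) := by
    intro a ha b hb hab
    rw [hell a, hell b]
    exact mul_lt_mul_of_pos_left (Real.exp_lt_exp.mpr (hgmono ha hb hab)) hCpos
  have hellanti : StrictAntiOn (ell ξ n) (Set.Ici rmax) := by
    intro a ha b hb hab
    rw [hell a, hell b]
    exact mul_lt_mul_of_pos_left (Real.exp_lt_exp.mpr (hganti ha hb hab)) hCpos
  -- tendsto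
  have htend : Tendsto (ell ξ n) atTop (nhds 0) := by
    have h0 : Tendsto (fun x : ℝ => x ^ α * Real.exp (-(1 / ξ ^ 2) * x)) atTop (nhds 0) :=
      tendsto_rpow_mul_exp_neg_mul_atTop_nhds_zero α _ (by positivity)
    have h1 : Tendsto (fun r : ℝ => 1 + r ^ 2) atTop atTop :=
      tendsto_atTop_add_const_left _ 1 (tendsto_pow_atTop two_ne_zero)
    have h2 := (h0.comp h1).const_mul (C * Real.exp (1 / ξ ^ 2))
    rw [mul_zero] at h2
    apply h2.congr
    intro r
    rw [hell r, hg]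
    simp only [Function.comp]
    rw [Real.exp_sub, Real.rpow_def_of_pos (hone r), ← Real.exp_add]
    rw [← Real.exp_sub, mul_assoc, ← Real.exp_add]
    congr 2
    ring
  -- greatest
  have hgreat : IsGreatest (ell ξ n '' Set.Ici 0) (ell ξ n rmax) := by
    constructor
    · exact ⟨rmax, hrmaxpos.le, rfl⟩
    · rintro y ⟨r, hr, rfl⟩
      rcases le_total r rmax with h | h
      · exact hellmono.monotoneOn ⟨hr, h⟩ ⟨hrmaxpos.le, le_refl _⟩ h
      · exact hellanti.antitoneOn (le_refl rmax) h h
  have hmax : etaMax ξ n = ell ξ n rmax := by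
    rw [etaMax]; exact hgreat.csSup_eq
  -- value
  have he0 : eta0 ξ n = C := by
    rw [eta0, hell 0, hg]
    norm_num
  have hval : ell ξ n rmax = C * Real.exp (1 / ξ ^ 2 - α) * (ξ ^ 2 * α) ^ α := by
    rw [hell rmax, hg]
    simp only [hsq]
    rw [show 1 + s = ξ ^ 2 * α from hsum]
    rw [Real.rpow_def_of_pos (by positivity : (0:ℝ) < ξ ^ 2 * α)]
    rw [mul_assoc, ← Real.exp_add]
    congr 2
    rw [hsdef, hα]
    field_simp
    ring
  have hR : Real.exp (1 / ξ ^ 2) * (((n : ℝ) + 1) * ξ ^ 2 / (2 * Real.exp 1)) ^ α * C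
      = C * Real.exp (1 / ξ ^ 2 - α) * (ξ ^ 2 * α) ^ α := by
    have h1 : ((n : ℝ) + 1) * ξ ^ 2 / (2 * Real.exp 1) = (ξ ^ 2 * α) / Real.exp 1 := by
      rw [hα]; field_simp
    rw [h1, Real.div_rpow (by positivity) (Real.exp_pos 1).le, Real.exp_one_rpow,
      Real.exp_sub]
    ring
  refine ⟨htend, hellmono, hellanti, hmax, ?_⟩
  rw [hmax, hval, he0, hR]
end

section
/- Fix ξ > 0. The maximum η_max(n) = sup_{r ≥ 0} ℓ_n(r) of the likelihood ratio satisfies η_max(n) ~ e^{1/ξ²} · (ξ/2) · √n as n → ∞; consequently η_max(n)^{2/(n+1)} → 1 as n → ∞. -/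
open Real MeasureTheory Filter

lemma ell_le (ξ : ℝ) (hξ : 0 < ξ) (n : ℕ) (hn : 2 ≤ ((n:ℝ)+1) * ξ^2) (r : ℝ) :
    ell ξ n r ≤ ell ξ n (Real.sqrt ((((n:ℝ)+1)/2) * ξ^2 - 1)) := by
  set s : ℝ := ((n:ℝ)+1)/2 with hs
  have hspos : 0 < s := by positivity
  have hu0 : 0 ≤ s * ξ^2 - 1 := by rw [hs]; nlinarith
  have hsq : Real.sqrt (s * ξ^2 - 1) ^ 2 = s * ξ^2 - 1 := Real.sq_sqrt hu0
  set u : ℝ := r ^ 2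
  have hu : 0 ≤ u := sq_nonneg r
  have hC : 0 ≤ Real.sqrt π / (Real.Gamma s * ξ ^ n) := by
    have := Real.Gamma_pos_of_pos hspos
    positivity
  unfold ell
  rw [hsq]
  rw [mul_assoc, mul_assoc, mul_le_mul_iff_of_pos_left, ← hs]
  swap
  · have := Real.Gamma_pos_of_pos hspos
    positivity
  -- goal: exp(-u/ξ²)(1+u)^s ≤ exp(-(sξ²-1)/ξ²)(sξ²)^s
  have h1e : (1:ℝ) + (s*ξ^2 - 1) = s * ξ^2 := by ring
  have hkey : (1 + u) ≤ (s*ξ^2) * Real.exp ((u - (s*ξ^2-1)) / (s*ξ^2)) := by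
    have h := Real.add_one_le_exp ((u - (s*ξ^2-1)) / (s*ξ^2))
    have hx : 0 < s * ξ^2 := by positivity
    calc (1:ℝ) + u = (s*ξ^2) * ((u - (s*ξ^2-1)) / (s*ξ^2) + 1) := by field_simp; ring
    _ ≤ (s*ξ^2) * Real.exp ((u - (s*ξ^2-1)) / (s*ξ^2)) := by
        exact mul_le_mul_of_nonneg_left h hx.le
  have hrpow : (1 + u) ^ s ≤ (s*ξ^2) ^ s * Real.exp ((u - (s*ξ^2-1)) / ξ^2) := by
    calc (1 + u) ^ s ≤ ((s*ξ^2) * Real.exp ((u - (s*ξ^2-1)) / (s*ξ^2))) ^ s :=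
          Real.rpow_le_rpow (by linarith) hkey hspos.le
    _ = (s*ξ^2) ^ s * Real.exp ((u - (s*ξ^2-1)) / ξ^2) := by
        rw [Real.mul_rpow (by positivity) (Real.exp_pos _).le, ← Real.exp_mul]
        congr 2
        field_simp
  calc Real.exp (-u/ξ^2) * (1+u) ^ s
      ≤ Real.exp (-u/ξ^2) * ((s*ξ^2) ^ s * Real.exp ((u - (s*ξ^2-1)) / ξ^2)) :=
        mul_le_mul_of_nonneg_left hrpow (Real.exp_pos _).le
    _ = Real.exp (-u/ξ^2) * Real.exp ((u - (s*ξ^2-1)) / ξ^2) * (s*ξ^2) ^ s := by ring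
    _ = Real.exp (-(s*ξ^2-1)/ξ^2) * (s*ξ^2) ^ s := by
        rw [← Real.exp_add]
        congr 2
        field_simp
        ring
    _ = Real.exp (-(s*ξ^2-1)/ξ^2) * (1 + (s*ξ^2-1)) ^ s := by rw [h1e]

lemma etaMax_eq (ξ : ℝ) (hξ : 0 < ξ) (n : ℕ) (hn : 2 ≤ ((n:ℝ)+1) * ξ^2) :
    etaMax ξ n = Real.sqrt π / (Real.Gamma (((n:ℝ)+1)/2) * ξ ^ n) *
      (Real.exp (1/ξ^2) * Real.exp (-(((n:ℝ)+1)/2)) * ((((n:ℝ)+1)/2) * ξ^2) ^ (((n:ℝ)+1)/2)) := by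
  set s : ℝ := ((n:ℝ)+1)/2 with hs
  have hspos : 0 < s := by positivity
  have hu0 : 0 ≤ s * ξ^2 - 1 := by rw [hs]; nlinarith
  have hgr : IsGreatest (ell ξ n '' Set.Ici 0) (ell ξ n (Real.sqrt (s * ξ^2 - 1))) := by
    constructor
    · exact Set.mem_image_of_mem _ (Real.sqrt_nonneg _)
    · rintro y ⟨r, -, rfl⟩
      exact ell_le ξ hξ n hn r
  have hval : ell ξ n (Real.sqrt (s * ξ^2 - 1)) =
      Real.sqrt π / (Real.Gamma s * ξ ^ n) *
        (Real.exp (1/ξ^2) * Real.exp (-s) * (s * ξ^2) ^ s) := by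
    unfold ell
    rw [Real.sq_sqrt hu0, ← hs]
    rw [show (1:ℝ) + (s*ξ^2 - 1) = s * ξ^2 by ring]
    rw [show -(s*ξ^2-1)/ξ^2 = 1/ξ^2 + -s by field_simp; ring, Real.exp_add]
    ring
  rw [etaMax, hgr.csSup_eq, hval, hs]


lemma Gamma_mid_sq_le {a b : ℝ} (ha : 0 < a) (hb : 0 < b) :
    Real.Gamma ((a + b) / 2) ^ 2 ≤ Real.Gamma a * Real.Gamma b := by
  have h := Real.convexOn_log_Gamma.2 (Set.mem_Ioi.2 ha) (Set.mem_Ioi.2 hb)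
    (by norm_num : (0:ℝ) ≤ 1/2) (by norm_num : (0:ℝ) ≤ 1/2) (by norm_num)
  simp only [smul_eq_mul, Function.comp_apply] at h
  rw [show (1/2 : ℝ) * a + (1/2) * b = (a+b)/2 by ring] at h
  have hga := Real.Gamma_pos_of_pos ha
  have hgb := Real.Gamma_pos_of_pos hb
  have hgm := Real.Gamma_pos_of_pos (by linarith : (0:ℝ) < (a+b)/2)
  have := Real.exp_le_exp.2 (by linarith : 2 * Real.log (Real.Gamma ((a+b)/2)) ≤
    Real.log (Real.Gamma a) + Real.log (Real.Gamma b))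
  rwa [Real.exp_add, Real.exp_log hga, Real.exp_log hgb, mul_comm 2, Real.exp_mul,
    Real.exp_log hgm, Real.rpow_two] at this

lemma U_bounds {x : ℝ} (hx : 0 < x) :
    1 ≤ Real.sqrt x * Real.Gamma x / Real.Gamma (x + 1/2) ∧
    Real.sqrt x * Real.Gamma x / Real.Gamma (x + 1/2) ≤ Real.sqrt (1 + 1/(2*x)) := by
  have hg := Real.Gamma_pos_of_pos hx
  have hg2 := Real.Gamma_pos_of_pos (by linarith : (0:ℝ) < x + 1/2)
  constructor
  · -- Γ(x+1/2) ≤ √x Γ x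
    have h1 : Real.Gamma ((x + (x+1)) / 2) ^ 2 ≤ Real.Gamma x * Real.Gamma (x+1) :=
      Gamma_mid_sq_le hx (by linarith)
    rw [show (x + (x+1))/2 = x + 1/2 by ring, Real.Gamma_add_one hx.ne'] at h1
    have h2 : Real.Gamma (x + 1/2) ≤ Real.sqrt x * Real.Gamma x := by
      have := Real.sqrt_le_sqrt h1
      rwa [Real.sqrt_sq hg2.le, show Real.Gamma x * (x * Real.Gamma x) = x * Real.Gamma x ^ 2 by ring,
        Real.sqrt_mul hx.le, Real.sqrt_sq hg.le] at this
    rw [le_div_iff₀ hg2, one_mul]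
    exact h2
  · -- √x Γ x ≤ √(1+1/(2x)) Γ(x+1/2)
    have h1 : Real.Gamma (((x+1/2) + (x+3/2)) / 2) ^ 2 ≤
        Real.Gamma (x+1/2) * Real.Gamma (x+3/2) := Gamma_mid_sq_le (by linarith) (by linarith)
    rw [show ((x+1/2) + (x+3/2))/2 = x + 1 by ring,
      show x + 3/2 = (x + 1/2) + 1 by ring,
      Real.Gamma_add_one (by linarith : (0:ℝ) < x+1/2).ne',
      Real.Gamma_add_one hx.ne'] at h1
    -- h1 : (x * Γ x)^2 ≤ Γ(x+1/2) * ((x+1/2) * Γ(x+1/2))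
    have key : x * Real.Gamma x ^ 2 ≤ (1 + 1/(2*x)) * Real.Gamma (x+1/2) ^ 2 := by
      have e : (1:ℝ) + 1/(2*x) = (x+1/2)/x := by field_simp
      rw [e, div_mul_eq_mul_div, le_div_iff₀ hx]
      nlinarith [h1]
    have := Real.sqrt_le_sqrt key
    rwa [Real.sqrt_mul hx.le, Real.sqrt_sq hg.le, Real.sqrt_mul (by positivity) ,
      Real.sqrt_sq hg2.le, ← div_le_iff₀ hg2] at this

noncomputable def sN (n : ℕ) : ℝ := ((n:ℝ)+1)/2
noncomputable def bN (n : ℕ) : ℝ :=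
  Real.Gamma (sN n) * Real.sqrt n / (2 * Real.sqrt π * (sN n) ^ (sN n) * Real.exp (-(sN n)))
noncomputable def TN (n : ℕ) : ℝ :=
  Stirling.stirlingSeq n * ((n:ℝ)/((n:ℝ)+1))^n * Real.exp 1 * Real.sqrt 2 *
    ((n:ℝ) * Real.sqrt n / (sN n * Real.sqrt (sN n))) / (4 * Real.sqrt π)
noncomputable def UN (n : ℕ) : ℝ :=
  Real.sqrt (sN n) * Real.Gamma (sN n) / Real.Gamma (sN n + 1/2)

lemma sN_pos (n : ℕ) : 0 < sN n := by unfold sN; positivity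

lemma dup (n : ℕ) :
    Real.Gamma (sN n) * Real.Gamma (sN n + 1/2) = (n.factorial : ℝ) * ((2:ℝ)^n)⁻¹ * Real.sqrt π := by
  have h := Real.Gamma_mul_Gamma_add_half (sN n)
  rw [show 2 * sN n = (n:ℝ)+1 by unfold sN; ring] at h
  rw [show (1:ℝ) - ((n:ℝ)+1) = -(n:ℝ) by ring] at h
  rw [Real.Gamma_nat_eq_factorial, Real.rpow_neg (by norm_num), Real.rpow_natCast] at h
  exact h

lemma bN_sq (n : ℕ) (hn : 1 ≤ n) : bN n ^ 2 = TN n * UN n := by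
  have hn' : (0:ℝ) < n := by exact_mod_cast hn
  have hspos := sN_pos n
  have hg := Real.Gamma_pos_of_pos hspos
  have hg2 := Real.Gamma_pos_of_pos (by linarith : (0:ℝ) < sN n + 1/2)
  have hg2' : Real.Gamma (sN n + 1/2) =
      (n.factorial : ℝ) * ((2:ℝ)^n)⁻¹ * Real.sqrt π / Real.Gamma (sN n) := by
    rw [eq_div_iff hg.ne', mul_comm]; exact dup n
  have hss : ((sN n) ^ (sN n)) ^ 2 = ((n:ℝ)+1)^(n+1) * (((2:ℝ)^(n+1))⁻¹) := by
    rw [← Real.rpow_natCast ((sN n) ^ (sN n)) 2, ← Real.rpow_mul hspos.le,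
      show sN n * (2:ℕ) = ((n+1 : ℕ) : ℝ) by unfold sN; push_cast; ring,
      Real.rpow_natCast]
    unfold sN
    rw [div_pow]
    push_cast
    ring
  have hexp : (Real.exp (-(sN n))) ^ 2 = (Real.exp 1 ^ (n+1))⁻¹ := by
    rw [← Real.exp_nat_mul, Real.exp_one_pow, ← Real.exp_neg]
    congr 1
    unfold sN; push_cast; ring
  have hsqn : Real.sqrt (2 * (n:ℝ)) = Real.sqrt 2 * Real.sqrt n := Real.sqrt_mul (by norm_num) _
  unfold bN TN UN Stirling.stirlingSeq
  rw [hg2', hsqn]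
  rw [div_pow]
  simp only [mul_pow]
  rw [Real.sq_sqrt hn'.le, hss, hexp]
  have h2n : ((2:ℝ)^n) ≠ 0 := by positivity
  have hfac : ((n.factorial:ℝ)) ≠ 0 := by positivity
  have hsq2 : Real.sqrt 2 ≠ 0 := by positivity
  have hsqn' : Real.sqrt (n:ℝ) ≠ 0 := by positivity
  have hsqpi : Real.sqrt π ≠ 0 := by positivity
  have hsqs : Real.sqrt (sN n) ≠ 0 := by positivity
  have hexp1 : Real.exp 1 ≠ 0 := (Real.exp_pos 1).ne'
  have hsn1 : (sN n) ^ (n+1) ≠ 0 := by positivity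
  field_simp
  rw [show sN n = ((n:ℝ)+1)/2 from rfl]
  ring_nf
  have hA : Real.exp 1 ^ n * (Real.exp 1)⁻¹ ^ n = 1 := by
    rw [← mul_pow, mul_inv_cancel₀ hexp1, one_pow]
  have hB : (1 + (n:ℝ))⁻¹ ^ n * (1 + (n:ℝ)) ^ n = 1 := by
    rw [← mul_pow, inv_mul_cancel₀ (by positivity), one_pow]
  linear_combination (Real.exp 1 * (n:ℝ) * (n:ℝ) ^ n * 2 ^ n * 4 +
    Real.exp 1 * (n:ℝ) ^ n * 2 ^ n * 4) * (hA - hB)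

lemma tendsto_sN : Filter.Tendsto sN atTop atTop := by
  apply Filter.Tendsto.atTop_div_const (by norm_num : (0:ℝ) < 2)
  exact tendsto_atTop_add_const_right _ 1 tendsto_natCast_atTop_atTop

lemma tendsto_vN : Filter.Tendsto (fun n : ℕ => (n:ℝ) / sN n) atTop (nhds 2) := by
  have h := tendsto_natCast_div_add_atTop (1:ℝ)
  have : (fun n : ℕ => (n:ℝ) / sN n) = fun n : ℕ => 2 * ((n:ℝ)/((n:ℝ)+1)) := by
    funext n; unfold sN; field_simp
  rw [this]
  simpa using (h.const_mul (2:ℝ))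

lemma tendsto_cN : Filter.Tendsto (fun n : ℕ => ((n:ℝ)/((n:ℝ)+1))^n) atTop (nhds (Real.exp (-1))) := by
  have h := (Real.tendsto_one_add_div_pow_exp (-1)).comp (tendsto_add_atTop_nat 1)
  have he : (fun n : ℕ => (1 + (-1) / ((n + 1 : ℕ):ℝ)) ^ (n+1)) =
      fun n : ℕ => ((n:ℝ)/((n:ℝ)+1))^(n+1) := by
    funext n
    have : ((n:ℝ)+1) ≠ 0 := by positivity
    push_cast
    congr 1
    field_simp
    ring
  rw [Function.comp_def] at h
  rw [he] at h
  have h2 : Filter.Tendsto (fun n : ℕ => ((n:ℝ)+1)/(n:ℝ)) atTop (nhds 1) := by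
    have : (fun n : ℕ => ((n:ℝ)+1)/(n:ℝ)) =ᶠ[atTop] fun n : ℕ => 1 + 1/(n:ℝ) := by
      filter_upwards [eventually_ge_atTop 1] with n hn
      have : (n:ℝ) ≠ 0 := by positivity
      field_simp
    rw [Filter.tendsto_congr' this]
    simpa using (tendsto_one_div_atTop_nhds_zero_nat).const_add (1:ℝ)
  have := h.mul h2
  rw [mul_one] at this
  apply this.congr'
  filter_upwards [eventually_ge_atTop 1] with n hn
  have hn0 : (n:ℝ) ≠ 0 := by
    have : (1:ℝ) ≤ (n:ℝ) := by exact_mod_cast hn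
    linarith
  have hn1 : ((n:ℝ)+1) ≠ 0 := by positivity
  rw [pow_succ]
  field_simp

lemma tendsto_TN : Filter.Tendsto TN atTop (nhds 1) := by
  have hsqrt2 : Filter.Tendsto (fun n : ℕ => (n:ℝ)/sN n * Real.sqrt ((n:ℝ)/sN n)) atTop
      (nhds (2 * Real.sqrt 2)) :=
    tendsto_vN.mul ((Real.continuous_sqrt.tendsto 2).comp tendsto_vN)
  have key := ((((Stirling.tendsto_stirlingSeq_sqrt_pi.mul tendsto_cN).mul
    (tendsto_const_nhds : Filter.Tendsto (fun _ : ℕ => Real.exp 1) atTop (nhds (Real.exp 1)))).mul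
    (tendsto_const_nhds : Filter.Tendsto (fun _ : ℕ => Real.sqrt 2) atTop (nhds (Real.sqrt 2)))).mul
    hsqrt2).div_const (4 * Real.sqrt π)
  have hval : Real.sqrt π * Real.exp (-1) * Real.exp 1 * Real.sqrt 2 * (2 * Real.sqrt 2) /
      (4 * Real.sqrt π) = 1 := by
    have h2 : Real.sqrt 2 * Real.sqrt 2 = 2 := Real.mul_self_sqrt (by norm_num)
    have hpi : Real.sqrt π > 0 := Real.sqrt_pos.2 Real.pi_pos
    have he : Real.exp (-1) * Real.exp 1 = 1 := by rw [← Real.exp_add]; norm_num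
    rw [div_eq_one_iff_eq (by positivity)]
    calc Real.sqrt π * Real.exp (-1) * Real.exp 1 * Real.sqrt 2 * (2 * Real.sqrt 2)
        = (Real.exp (-1) * Real.exp 1) * (Real.sqrt 2 * Real.sqrt 2) * 2 * Real.sqrt π := by ring
      _ = 4 * Real.sqrt π := by rw [he, h2]; ring
  rw [hval] at key
  apply key.congr'
  filter_upwards [eventually_ge_atTop 1] with n hn
  have hn0 : (n:ℝ) ≠ 0 := by
    have : (1:ℝ) ≤ (n:ℝ) := by exact_mod_cast hn
    linarith
  have hs := sN_pos n
  unfold TN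
  rw [Real.sqrt_div (Nat.cast_nonneg n)]
  have hss : Real.sqrt (sN n) ≠ 0 := by positivity
  field_simp

lemma tendsto_UN : Filter.Tendsto UN atTop (nhds 1) := by
  have hup : Filter.Tendsto (fun n : ℕ => Real.sqrt (1 + 1/(2 * sN n))) atTop (nhds 1) := by
    have h0 : Filter.Tendsto (fun n : ℕ => 1/(2 * sN n)) atTop (nhds 0) := by
      simp only [one_div]
      exact tendsto_inv_atTop_zero.comp (tendsto_sN.const_mul_atTop (by norm_num : (0:ℝ) < 2))
    have h1 := h0.const_add (1:ℝ)
    rw [add_zero] at h1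
    have := (Real.continuous_sqrt.tendsto 1).comp h1
    simpa [Function.comp_def] using this
  apply tendsto_of_tendsto_of_tendsto_of_le_of_le' tendsto_const_nhds hup
  · filter_upwards with n
    exact (U_bounds (sN_pos n)).1
  · filter_upwards with n
    exact (U_bounds (sN_pos n)).2

lemma bN_nonneg (n : ℕ) : 0 ≤ bN n := by
  have h1 := Real.Gamma_pos_of_pos (sN_pos n)
  have h2 : 0 < (sN n) ^ (sN n) := Real.rpow_pos_of_pos (sN_pos n) _
  unfold bN
  positivity

lemma tendsto_bN : Filter.Tendsto bN atTop (nhds 1) := by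
  have hTU : Filter.Tendsto (fun n => TN n * UN n) atTop (nhds 1) := by
    simpa using tendsto_TN.mul tendsto_UN
  have h := (Real.continuous_sqrt.tendsto 1).comp hTU
  rw [Real.sqrt_one] at h
  apply h.congr'
  filter_upwards [eventually_ge_atTop 1] with n hn
  rw [Function.comp_apply, ← bN_sq n hn, Real.sqrt_sq (bN_nonneg n)]

lemma tendsto_bN_inv : Filter.Tendsto (fun n => (bN n)⁻¹) atTop (nhds 1) := by
  simpa using tendsto_bN.inv₀ one_ne_zero

/-- `η_max(n) ~ e^{1/ξ²}·(ξ/2)·√n`, and consequently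
`η_max(n)^{2/(n+1)} → 1`. -/
theorem etaMax_asymptotics
    (ξ : ℝ) (hξ : 0 < ξ) :
    Tendsto (fun n : ℕ => etaMax ξ n / (Real.exp (1 / ξ ^ 2) * (ξ / 2) * Real.sqrt n))
      atTop (nhds 1) ∧
    Tendsto (fun n : ℕ => etaMax ξ n ^ (2 / ((n : ℝ) + 1))) atTop (nhds 1) := by
  have hnat : Tendsto (fun n : ℕ => ((n:ℝ)+1)) atTop atTop :=
    tendsto_atTop_add_const_right atTop 1 tendsto_natCast_atTop_atTop
  have hxi2 : Tendsto (fun n : ℕ => ((n:ℝ)+1) * ξ^2) atTop atTop :=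
    hnat.atTop_mul_const (show (0:ℝ) < ξ^2 by positivity)
  have hev : ∀ᶠ n : ℕ in atTop, 1 ≤ n ∧ 2 ≤ ((n:ℝ)+1) * ξ^2 :=
    (eventually_ge_atTop 1).and (hxi2.eventually_ge_atTop 2)
  have heq : (fun n : ℕ => etaMax ξ n / (Real.exp (1 / ξ ^ 2) * (ξ / 2) * Real.sqrt n))
      =ᶠ[atTop] fun n => (bN n)⁻¹ := by
    filter_upwards [hev] with n ⟨hn1, hn2⟩
    rw [etaMax_eq ξ hξ n hn2]
    have hn' : (0:ℝ) < n := by exact_mod_cast hn1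
    have hspos : (0:ℝ) < ((n:ℝ)+1)/2 := by positivity
    have hmul : ((((n:ℝ)+1)/2) * ξ^2) ^ (((n:ℝ)+1)/2)
        = (((n:ℝ)+1)/2) ^ (((n:ℝ)+1)/2) * ξ^(n+1) := by
      rw [Real.mul_rpow hspos.le (by positivity), ← Real.rpow_natCast ξ 2,
        ← Real.rpow_mul hξ.le, show (((2:ℕ)):ℝ) * (((n:ℝ)+1)/2) = ((n+1 : ℕ) : ℝ) by
          push_cast; ring, Real.rpow_natCast]
    rw [hmul]
    unfold bN sN
    have hg := Real.Gamma_pos_of_pos hspos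
    have hss : (0:ℝ) < (((n:ℝ)+1)/2) ^ (((n:ℝ)+1)/2) := Real.rpow_pos_of_pos hspos _
    have hsqn : (0:ℝ) < Real.sqrt n := Real.sqrt_pos.2 hn'
    have hexp : (0:ℝ) < Real.exp (-(((n:ℝ)+1)/2)) := Real.exp_pos _
    have hxin : (0:ℝ) < ξ ^ n := by positivity
    rw [pow_succ]
    field_simp
    ring
  have H1 : Tendsto (fun n : ℕ => etaMax ξ n / (Real.exp (1 / ξ ^ 2) * (ξ / 2) * Real.sqrt n))
      atTop (nhds 1) := tendsto_bN_inv.congr' heq.symm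
  refine ⟨H1, ?_⟩
  -- second limit
  have hqpos : ∀ᶠ n : ℕ in atTop,
      0 < etaMax ξ n ∧ 0 < Real.exp (1 / ξ ^ 2) * (ξ / 2) * Real.sqrt n := by
    filter_upwards [hev] with n ⟨hn1, hn2⟩
    have hn' : (0:ℝ) < n := by exact_mod_cast hn1
    have hspos : (0:ℝ) < ((n:ℝ)+1)/2 := by positivity
    have hg := Real.Gamma_pos_of_pos hspos
    have hss : (0:ℝ) < ((((n:ℝ)+1)/2) * ξ^2) ^ (((n:ℝ)+1)/2) :=
      Real.rpow_pos_of_pos (by positivity) _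
    constructor
    · rw [etaMax_eq ξ hξ n hn2]
      positivity
    · have : (0:ℝ) < Real.sqrt n := Real.sqrt_pos.2 hn'
      positivity
  have hlogq : Tendsto (fun n : ℕ => Real.log
      (etaMax ξ n / (Real.exp (1 / ξ ^ 2) * (ξ / 2) * Real.sqrt n))) atTop (nhds 0) := by
    have := (Real.continuousAt_log one_ne_zero).tendsto.comp H1
    simpa [Function.comp_def] using this
  have hzero : Tendsto (fun n : ℕ => 2 / ((n:ℝ)+1)) atTop (nhds 0) :=
    tendsto_const_nhds.div_atTop hnat
  have hlogn : Tendsto (fun n : ℕ => Real.log n / ((n:ℝ)+1)) atTop (nhds 0) := by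
    have h1 : Tendsto (fun n : ℕ => Real.log n / (n:ℝ)) atTop (nhds 0) := by
      have := (Real.isLittleO_log_id_atTop.tendsto_div_nhds_zero).comp
        tendsto_natCast_atTop_atTop
      simpa [Function.comp_def] using this
    have h2 := h1.mul (tendsto_natCast_div_add_atTop (1:ℝ))
    rw [zero_mul] at h2
    apply h2.congr'
    filter_upwards [eventually_ge_atTop 1] with n hn
    have hn0 : (n:ℝ) ≠ 0 := by
      have : (1:ℝ) ≤ (n:ℝ) := by exact_mod_cast hn
      linarith
    have hn1 : ((n:ℝ)+1) ≠ 0 := by positivity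
    field_simp
  -- L n := (2/(n+1)) * log (etaMax)
  have hL : Tendsto (fun n : ℕ => (2 / ((n:ℝ)+1)) * Real.log (etaMax ξ n)) atTop (nhds 0) := by
    have K : ℝ := 1/ξ^2 + Real.log (ξ/2)
    have t1 := hzero.mul hlogq
    rw [mul_zero] at t1
    have t2 := hzero.mul_const (1/ξ^2 + Real.log (ξ/2))
    rw [zero_mul] at t2
    have t12 := (t1.add t2).add hlogn
    rw [add_zero, add_zero] at t12
    apply t12.congr'
    filter_upwards [hqpos, eventually_ge_atTop 1] with n hp hn
    obtain ⟨hpos, hposd⟩ := hp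
    have hn' : (0:ℝ) < n := by exact_mod_cast hn
    have hq0 : etaMax ξ n / (Real.exp (1/ξ^2) * (ξ/2) * Real.sqrt n) ≠ 0 :=
      (div_pos hpos hposd).ne'
    have hsq : (0:ℝ) < Real.sqrt n := Real.sqrt_pos.2 hn'
    have hlogeta : Real.log (etaMax ξ n) =
        Real.log (etaMax ξ n / (Real.exp (1/ξ^2) * (ξ/2) * Real.sqrt n))
          + (1/ξ^2 + Real.log (ξ/2)) + (1/2) * Real.log n := by
      rw [Real.log_div hpos.ne' hposd.ne', Real.log_mul (by positivity) hsq.ne',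
        Real.log_mul (Real.exp_pos _).ne' (by positivity : (ξ/2) ≠ 0),
        Real.log_exp, Real.log_sqrt hn'.le]
      ring
    rw [hlogeta]
    ring
  have hexp := (Real.continuous_exp.tendsto 0).comp hL
  rw [Real.exp_zero] at hexp
  apply hexp.congr'
  filter_upwards [hqpos] with n hp
  rw [Function.comp_apply, Real.rpow_def_of_pos hp.1, mul_comm]
end

section
/- Fix ξ > 0 and n ∈ ℕ with n > 2/ξ² - 1, and let η satisfy η₀(n) < η < η_max(n). Then the equation ℓ_n(r) = η has exactly two solutions r > 0, and denoting them r₁ < r₂ one has r₁ < r_max < r₂, where r_max = √(ξ²(n+1)/2 - 1). -/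
open Real MeasureTheory Filter

/-- For `n > 2/ξ² - 1` and `η₀(n) < η < η_max(n)`, the equation
`ℓ_n(r) = η` has exactly two positive solutions `r₁ < r_max < r₂`. -/
theorem likelihood_ratio_two_solutions
    (ξ : ℝ) (n : ℕ) (hξ : 0 < ξ) (hn : 2 / ξ ^ 2 - 1 < (n : ℝ))
    (η : ℝ) (h0 : eta0 ξ n < η) (hmax : η < etaMax ξ n) :
    ∃ r₁ r₂ : ℝ, 0 < r₁ ∧
      r₁ < Real.sqrt (ξ ^ 2 * ((n : ℝ) + 1) / 2 - 1) ∧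
      Real.sqrt (ξ ^ 2 * ((n : ℝ) + 1) / 2 - 1) < r₂ ∧
      ell ξ n r₁ = η ∧ ell ξ n r₂ = η ∧
      ∀ r : ℝ, 0 < r → ell ξ n r = η → r = r₁ ∨ r = r₂ := by
  have hξ2 : (0:ℝ) < ξ ^ 2 := by positivity
  set p : ℝ := ((n : ℝ) + 1) / 2 with hp
  have hp0 : 0 < p := by positivity
  set C : ℝ := Real.sqrt π / (Real.Gamma p * ξ ^ n) with hCdef
  have hC : 0 < C := by
    apply div_pos (Real.sqrt_pos.mpr Real.pi_pos)
    exact mul_pos (Real.Gamma_pos_of_pos hp0) (pow_pos hξ n)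
  set g : ℝ → ℝ := fun r => Real.log C - r ^ 2 / ξ ^ 2 + p * Real.log (1 + r ^ 2) with hgdef
  have hell : ∀ r : ℝ, ell ξ n r = Real.exp (g r) := by
    intro r
    have h1 : (0:ℝ) < 1 + r ^ 2 := by positivity
    have : g r = Real.log C + (-r ^ 2 / ξ ^ 2) + Real.log (1 + r ^ 2) * p := by
      simp only [hgdef]; ring
    rw [ell, this, Real.exp_add, Real.exp_add, Real.exp_log hC,
      ← Real.rpow_def_of_pos h1]
  have hg : ∀ r : ℝ, HasDerivAt g (2 * r * (p / (1 + r ^ 2) - 1 / ξ ^ 2)) r := by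
    intro r
    have h1 : (0:ℝ) < 1 + r ^ 2 := by positivity
    have hsq : HasDerivAt (fun r : ℝ => r ^ 2) (2 * r) r := by
      simpa using hasDerivAt_pow 2 r
    have h3 : HasDerivAt (fun r : ℝ => 1 + r ^ 2) (2 * r) r := hsq.const_add 1
    have h4 : HasDerivAt (fun r : ℝ => Real.log (1 + r ^ 2)) (2 * r / (1 + r ^ 2)) r :=
      h3.log h1.ne'
    have h5 := ((hsq.div_const (ξ ^ 2)).const_sub (Real.log C)).add (h4.const_mul p)
    convert h5 using 1
    · rfl
    · rfl
    · rfl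
    field_simp
    ring
  have hgc : Continuous g := continuous_iff_continuousAt.mpr fun r => (hg r).continuousAt
  have hec : Continuous (ell ξ n) := by
    have : ell ξ n = fun r => Real.exp (g r) := funext hell
    rw [this]; exact Real.continuous_exp.comp hgc
  set R : ℝ := Real.sqrt (ξ ^ 2 * ((n : ℝ) + 1) / 2 - 1) with hRdef
  have hsval : ξ ^ 2 * ((n : ℝ) + 1) / 2 - 1 = ξ ^ 2 * p - 1 := by rw [hp]; ring
  have hspos : 0 < ξ ^ 2 * p - 1 := by
    have h2 : 2 / ξ ^ 2 < (n : ℝ) + 1 := by linarith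
    have := (div_lt_iff₀ hξ2).mp h2
    rw [hp]; nlinarith
  have hR0 : 0 < R := Real.sqrt_pos.mpr (by rw [hsval]; exact hspos)
  have hR2 : R ^ 2 = ξ ^ 2 * p - 1 := by
    rw [hRdef, Real.sq_sqrt (by rw [hsval]; exact hspos.le), hsval]
  have hgmono : StrictMonoOn g (Set.Icc 0 R) := by
    apply strictMonoOn_of_deriv_pos (convex_Icc 0 R) hgc.continuousOn
    intro r hr
    rw [interior_Icc] at hr
    rw [(hg r).deriv]
    have h1 : (0:ℝ) < 1 + r ^ 2 := by positivity
    have hrR : r ^ 2 < R ^ 2 := by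
      apply pow_lt_pow_left₀ hr.2 hr.1.le two_ne_zero
    have : 1 / ξ ^ 2 < p / (1 + r ^ 2) := by
      rw [div_lt_div_iff₀ hξ2 h1]
      nlinarith [hR2]
    have h2 : 0 < p / (1 + r ^ 2) - 1 / ξ ^ 2 := by linarith
    exact mul_pos (mul_pos two_pos hr.1) h2
  have hganti : StrictAntiOn g (Set.Ici R) := by
    apply strictAntiOn_of_deriv_neg (convex_Ici R) hgc.continuousOn
    intro r hr
    rw [interior_Ici] at hr
    rw [(hg r).deriv]
    have hr0 : 0 < r := hR0.trans hr
    have h1 : (0:ℝ) < 1 + r ^ 2 := by positivity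
    have hrR : R ^ 2 < r ^ 2 := by
      apply pow_lt_pow_left₀ hr hR0.le two_ne_zero
    have : p / (1 + r ^ 2) < 1 / ξ ^ 2 := by
      rw [div_lt_div_iff₀ h1 hξ2]
      nlinarith [hR2]
    nlinarith
  have hemono : StrictMonoOn (ell ξ n) (Set.Icc 0 R) := fun a ha b hb hab => by
    rw [hell a, hell b]; exact Real.exp_lt_exp.mpr (hgmono ha hb hab)
  have heanti : StrictAntiOn (ell ξ n) (Set.Ici R) := fun a ha b hb hab => by
    rw [hell a, hell b]; exact Real.exp_lt_exp.mpr (hganti ha hb hab)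
  -- η < ell R
  have hηR : η < ell ξ n R := by
    have hub : ∀ y ∈ ell ξ n '' Set.Ici 0, y ≤ ell ξ n R := by
      rintro y ⟨r, hr, rfl⟩
      rcases le_total r R with h | h
      · rcases eq_or_lt_of_le h with rfl | h'
        · exact le_rfl
        · exact (hemono ⟨hr, h⟩ ⟨hR0.le, le_rfl⟩ h').le
      · rcases eq_or_lt_of_le h with rfl | h'
        · exact le_rfl
        · exact (heanti Set.self_mem_Ici h h').le
    have : etaMax ξ n ≤ ell ξ n R := by
      apply Real.sSup_le hub
      rw [hell]; exact (Real.exp_pos _).le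
    linarith
  have h00 : ell ξ n 0 < η := h0
  have hηpos : 0 < η := lt_trans (by rw [hell]; exact Real.exp_pos _) h00
  -- existence of r₁
  obtain ⟨r₁, hr₁mem, hr₁⟩ :=
    intermediate_value_Ioo hR0.le hec.continuousOn (Set.mem_Ioo.mpr ⟨h00, hηR⟩)
  -- limit of ell at infinity
  have hlim : Tendsto (ell ξ n) atTop (nhds 0) := by
    have h1 : Tendsto (fun x : ℝ => x ^ p * Real.exp (-(ξ ^ 2)⁻¹ * x)) atTop (nhds 0) :=
      tendsto_rpow_mul_exp_neg_mul_atTop_nhds_zero p (ξ ^ 2)⁻¹ (by positivity)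
    have h2 : Tendsto (fun r : ℝ => 1 + r ^ 2) atTop atTop :=
      tendsto_atTop_add_const_left _ 1 (tendsto_pow_atTop two_ne_zero)
    have key : ∀ r : ℝ, ell ξ n r =
        (C * Real.exp ((ξ ^ 2)⁻¹)) * ((1 + r ^ 2) ^ p * Real.exp (-(ξ ^ 2)⁻¹ * (1 + r ^ 2))) := by
      intro r
      have h1' : (0:ℝ) < 1 + r ^ 2 := by positivity
      rw [hell r, Real.rpow_def_of_pos h1', ← Real.exp_log hC, ← Real.exp_add, ← Real.exp_add,
        ← Real.exp_add]
      congr 1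
      simp only [hgdef]
      field_simp
      ring
    have := (h1.comp h2).const_mul (C * Real.exp ((ξ ^ 2)⁻¹))
    rw [mul_zero] at this
    exact this.congr fun r => (key r).symm
  obtain ⟨M, hMη, hMR⟩ := ((hlim.eventually (gt_mem_nhds hηpos)).and
    (eventually_ge_atTop (R + 1))).exists
  have hRM : R < M := by linarith
  -- existence of r₂
  obtain ⟨r₂, hr₂mem, hr₂⟩ :=
    intermediate_value_Ioo' hRM.le hec.continuousOn (Set.mem_Ioo.mpr ⟨hMη, hηR⟩)
  refine ⟨r₁, r₂, hr₁mem.1, hr₁mem.2, hr₂mem.1, hr₁, hr₂, ?_⟩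
  intro r hr hrη
  rcases lt_trichotomy r R with h | h | h
  · left
    exact hemono.injOn ⟨hr.le, h.le⟩ ⟨hr₁mem.1.le, hr₁mem.2.le⟩ (by rw [hrη, hr₁])
  · exfalso; rw [h] at hrη; linarith
  · right
    exact heanti.injOn (Set.mem_Ici.mpr h.le) (Set.mem_Ici.mpr hr₂mem.1.le) (by rw [hrη, hr₂])
end

section
/- Let n ∈ ℕ, n ≥ 1, and 0 < a < b. Then the integral of the isotropic Cauchy density over the annulus {y ∈ ℝ^n : a ≤ ‖y‖ ≤ b} equals (1/√π) · (Γ((n+1)/2)/Γ(n/2)) · ∫_{1/b²}^{1/a²} (1 + u)^{-(n+1)/2} u^{-1/2} du. -/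
open Real MeasureTheory Filter

/-- The Cauchy mass of the annulus `a ≤ ‖y‖ ≤ b` equals
`(1/√π)·(Γ((n+1)/2)/Γ(n/2))·∫_{1/b²}^{1/a²} (1+u)^{-(n+1)/2} u^{-1/2} du`. -/
theorem cauchy_annulus_integral
    (n : ℕ) (hn : 1 ≤ n) (a b : ℝ) (ha : 0 < a) (hab : a < b) :
    (∫ y in {y : EuclideanSpace ℝ (Fin n) | a ≤ ‖y‖ ∧ ‖y‖ ≤ b}, pC n y) =
      (1 / Real.sqrt π) * (Real.Gamma (((n : ℝ) + 1) / 2) / Real.Gamma ((n : ℝ) / 2)) *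
        ∫ u in (1 / b ^ 2)..(1 / a ^ 2),
          (1 + u) ^ (-(((n : ℝ) + 1) / 2)) * u ^ (-(1 : ℝ) / 2) := by
  have hb : 0 < b := ha.trans hab
  haveI : Nonempty (Fin n) := ⟨⟨0, hn⟩⟩
  set p : ℝ := ((n : ℝ) + 1) / 2 with hpdef
  set c : ℝ := Real.Gamma p / π ^ p with hcdef
  set F : ℝ → ℝ := fun x => x ^ (n - 1) * (1 + x ^ 2) ^ (-p) with hFdef
  set I : ℝ := ∫ x in a..b, F x with hIdef
  have hdim : Module.finrank ℝ (EuclideanSpace ℝ (Fin n)) = n := finrank_euclideanSpace_fin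
  have hΓpos : 0 < Real.Gamma ((n : ℝ) / 2) :=
    Real.Gamma_pos_of_pos (by positivity)
  -- LHS
  set g : ℝ → ℝ := Set.indicator (Set.Icc a b) (fun r => c * (1 + r ^ 2) ^ (-p)) with hgdef
  have h1 : (∫ y in {y : EuclideanSpace ℝ (Fin n) | a ≤ ‖y‖ ∧ ‖y‖ ≤ b}, pC n y)
      = ∫ y : EuclideanSpace ℝ (Fin n), g ‖y‖ := by
    have hset : {y : EuclideanSpace ℝ (Fin n) | a ≤ ‖y‖ ∧ ‖y‖ ≤ b}
        = (fun y : EuclideanSpace ℝ (Fin n) => ‖y‖) ⁻¹' Set.Icc a b := rfl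
    rw [hset, ← MeasureTheory.integral_indicator
      (measurableSet_preimage measurable_norm measurableSet_Icc)]
    congr 1
  have h2 : (∫ y : EuclideanSpace ℝ (Fin n), g ‖y‖)
      = n • (volume (Metric.ball (0 : EuclideanSpace ℝ (Fin n)) 1)).toReal •
          ∫ y in Set.Ioi (0 : ℝ), y ^ (n - 1) • g y := by
    rw [MeasureTheory.integral_fun_norm_addHaar volume g, hdim]
    rfl
  have h3 : (∫ y in Set.Ioi (0 : ℝ), y ^ (n - 1) • g y) = c * I := by
    have heq : ∀ y : ℝ, y ^ (n - 1) • g y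
        = Set.indicator (Set.Icc a b) (fun y => c * F y) y := by
      intro y
      by_cases h : y ∈ Set.Icc a b
      · rw [hgdef, Set.indicator_of_mem h, Set.indicator_of_mem h]
        simp only [smul_eq_mul, hFdef]; ring
      · rw [hgdef, Set.indicator_of_notMem h, Set.indicator_of_notMem h, smul_zero]
    simp_rw [heq]
    have hinter : Set.Ioi (0 : ℝ) ∩ Set.Icc a b = Set.Icc a b :=
      Set.inter_eq_right.mpr (fun x hx => lt_of_lt_of_le ha hx.1)
    rw [MeasureTheory.setIntegral_indicator measurableSet_Icc, hinter,
      MeasureTheory.integral_Icc_eq_integral_Ioc,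
      ← intervalIntegral.integral_of_le hab.le, hIdef, intervalIntegral.integral_const_mul]
  -- RHS: substitution u = 1/x²
  have h4 : (∫ u in (1 / b ^ 2)..(1 / a ^ 2),
        (1 + u) ^ (-p) * u ^ (-(1 : ℝ) / 2)) = 2 * I := by
    set G : ℝ → ℝ := fun u => (1 + u) ^ (-p) * u ^ (-(1 : ℝ) / 2) with hGdef
    set φ : ℝ → ℝ := fun x => (x ^ 2)⁻¹ with hφdef
    set φ' : ℝ → ℝ := fun x => -(2 * x) / (x ^ 2) ^ 2 with hφ'def
    have huIcc : Set.uIcc a b = Set.Icc a b := Set.uIcc_of_le hab.le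
    have hmem : ∀ x ∈ Set.uIcc a b, 0 < x := by
      intro x hx; rw [huIcc] at hx; exact lt_of_lt_of_le ha hx.1
    have hderiv : ∀ x ∈ Set.uIcc a b, HasDerivAt φ (φ' x) x := by
      intro x hx
      have hx0 : x ≠ 0 := (hmem x hx).ne'
      have := (hasDerivAt_pow 2 x).inv (pow_ne_zero 2 hx0)
      simpa [hφdef, hφ'def, pow_one, Pi.inv_def] using this
    have hφ'cont : ContinuousOn φ' (Set.uIcc a b) := by
      apply ContinuousOn.div (by fun_prop) (by fun_prop)
      intro x hx; exact pow_ne_zero 2 (pow_ne_zero 2 (hmem x hx).ne')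
    have hGcont : ContinuousOn G (φ '' Set.uIcc a b) := by
      have himg : φ '' Set.uIcc a b ⊆ Set.Ioi 0 := by
        rintro _ ⟨x, hx, rfl⟩
        exact inv_pos.mpr (pow_pos (hmem x hx) 2)
      apply ContinuousOn.mono _ himg
      apply ContinuousOn.mul
      · apply ContinuousOn.rpow_const (by fun_prop)
        intro x hx
        exact Or.inl (by have := Set.mem_Ioi.mp hx; positivity)
      · apply ContinuousOn.rpow_const continuousOn_id
        intro x hx; exact Or.inl (Set.mem_Ioi.mp hx).ne'
    have hsub := intervalIntegral.integral_comp_smul_deriv' hderiv hφ'cont hGcont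
    have hφa : φ a = 1 / a ^ 2 := by rw [hφdef]; simp [one_div]
    have hφb : φ b = 1 / b ^ 2 := by rw [hφdef]; simp [one_div]
    have hflip : (∫ u in (1 / b ^ 2)..(1 / a ^ 2), G u)
        = ∫ x in a..b, (-(φ' x)) * G (φ x) := by
      rw [← hφa, ← hφb, intervalIntegral.integral_symm, ← hsub,
        ← intervalIntegral.integral_neg]
      congr 1; ext x; simp only [smul_eq_mul, Function.comp, neg_mul]
    have hint : ∀ x ∈ Set.uIcc a b, (-(φ' x)) * G (φ x) = 2 * F x := by
      intro x hx
      have hx0 : 0 < x := hmem x hx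
      have hx2 : (0 : ℝ) < x ^ 2 := pow_pos hx0 2
      have hxhalf : ((x ^ 2 : ℝ)) ^ ((1 : ℝ) / 2) = x := by
        rw [← Real.sqrt_eq_rpow, Real.sqrt_sq hx0.le]
      have e1 : ((x ^ 2)⁻¹ : ℝ) ^ (-(1 : ℝ) / 2) = x := by
        rw [neg_div, Real.inv_rpow hx2.le, Real.rpow_neg hx2.le, inv_inv, hxhalf]
      have key : ((x ^ 2 : ℝ)) ^ p = x ^ (n + 1) := by
        rw [← Real.rpow_natCast x 2, ← Real.rpow_mul hx0.le, ← Real.rpow_natCast x (n + 1)]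
        congr 1
        push_cast [hpdef]
        ring
      have e2 : ((x ^ 2)⁻¹ : ℝ) ^ (-p) = x ^ (n + 1) := by
        rw [Real.inv_rpow hx2.le, Real.rpow_neg hx2.le, inv_inv, key]
      have e4 : (1 + ((x ^ 2)⁻¹ : ℝ)) ^ (-p)
          = (1 + x ^ 2) ^ (-p) * x ^ (n + 1) := by
        have hs : (1 : ℝ) + (x ^ 2)⁻¹ = (1 + x ^ 2) * (x ^ 2)⁻¹ := by
          rw [add_mul, one_mul, mul_inv_cancel₀ hx2.ne', add_comm]
        rw [hs, Real.mul_rpow (by positivity) (by positivity), e2]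
      have hpow : x ^ (n + 1) * x * x = x ^ (n - 1) * (x ^ 2) ^ 2 := by
        rw [← pow_succ, ← pow_succ, ← pow_mul, ← pow_add]
        congr 1
        omega
      rw [hGdef, hφdef]
      simp only [hφ'def, hFdef]
      rw [e1, e4]
      rw [neg_div, neg_neg, div_mul_eq_mul_div, div_eq_iff (by positivity)]
      linear_combination 2 * (1 + x ^ 2) ^ (-p) * hpow
    rw [hGdef] at hflip
    rw [hflip, intervalIntegral.integral_congr hint, intervalIntegral.integral_const_mul]
  -- put together
  rw [h1, h2, h3, h4]
  rw [EuclideanSpace.volume_ball, Fintype.card_fin, ENNReal.ofReal_one, one_pow, one_mul,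
    ENNReal.toReal_ofReal (by positivity), nsmul_eq_mul, smul_eq_mul]
  have hΓadd : Real.Gamma ((n : ℝ) / 2 + 1) = ((n : ℝ) / 2) * Real.Gamma ((n : ℝ) / 2) := by
    rw [Real.Gamma_add_one (by positivity)]
  have hsqrt : Real.sqrt π = π ^ ((1 : ℝ) / 2) := Real.sqrt_eq_rpow π
  have hpin : Real.sqrt π ^ n = π ^ ((n : ℝ) / 2) := by
    rw [hsqrt, ← Real.rpow_natCast (π ^ ((1 : ℝ) / 2)) n, ← Real.rpow_mul Real.pi_pos.le]
    ring_nf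
  have hpip : π ^ p = π ^ ((n : ℝ) / 2) * π ^ ((1 : ℝ) / 2) := by
    rw [← Real.rpow_add Real.pi_pos, hpdef]; ring_nf
  have hne1 : π ^ ((n : ℝ) / 2) ≠ 0 := (Real.rpow_pos_of_pos Real.pi_pos _).ne'
  have hne2 : π ^ ((1 : ℝ) / 2) ≠ 0 := (Real.rpow_pos_of_pos Real.pi_pos _).ne'
  have hnn : ((n : ℝ)) ≠ 0 := Nat.cast_ne_zero.mpr (by omega)
  rw [hcdef, hΓadd, hpin, hpip, hsqrt]
  field_simp
end

section
/- Let n ∈ ℕ, n ≥ 1, and 0 < a < b. Then the integral of the isotropic Cauchy density over the annulus satisfies the lower bound ∫_{{y ∈ ℝ^n : a ≤ ‖y‖ ≤ b}} p_C(y) dy ≥ (1/√π) · (Γ((n+1)/2)/Γ(n/2)) · √(2/(n+1)) · ∫_{(n+1)/(2b²)}^{(n+1)/(2a²)} t^{-1/2} e^{-t} dt. -/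
open Real MeasureTheory Filter

lemma key_ineq (n : ℕ) (hn : 1 ≤ n) {x : ℝ} (hx : 0 < x) :
    (x ^ 2)⁻¹ * Real.exp (-(((n : ℝ) + 1) / (2 * x ^ 2))) ≤
      x ^ (n - 1) * (1 + x ^ 2) ^ (-(((n : ℝ) + 1) / 2)) := by
  set p : ℝ := ((n : ℝ) + 1) / 2 with hp
  have hppos : 0 < p := by positivity
  have h1 : (0 : ℝ) < 1 + x ^ 2 := by positivity
  have hxx : (0 : ℝ) < x ^ 2 := by positivity
  have key : Real.exp (-(p / x ^ 2)) ≤ (x ^ 2 / (1 + x ^ 2)) ^ p := by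
    rw [Real.rpow_def_of_pos (by positivity)]
    apply Real.exp_le_exp.mpr
    have hlog : Real.log ((1 + x ^ 2) / x ^ 2) ≤ (1 + x ^ 2) / x ^ 2 - 1 :=
      Real.log_le_sub_one_of_pos (by positivity)
    have h2 : (1 + x ^ 2) / x ^ 2 - 1 = (x ^ 2)⁻¹ := by field_simp; ring
    have h3 : Real.log (x ^ 2 / (1 + x ^ 2)) = -Real.log ((1 + x ^ 2) / x ^ 2) := by
      rw [← Real.log_inv, inv_div]
    have h4 : -(x ^ 2)⁻¹ ≤ -Real.log ((1 + x ^ 2) / x ^ 2) := by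
      have := hlog.trans_eq h2; linarith
    calc -(p / x ^ 2) = p * (-(x ^ 2)⁻¹) := by field_simp
      _ ≤ p * (-Real.log ((1 + x ^ 2) / x ^ 2)) :=
        mul_le_mul_of_nonneg_left h4 hppos.le
      _ = Real.log (x ^ 2 / (1 + x ^ 2)) * p := by rw [h3]; ring
  have hx2p : (x ^ 2 : ℝ) ^ p = x ^ (n + 1) := by
    rw [← Real.rpow_natCast x 2, ← Real.rpow_mul hx.le]
    rw [show ((2 : ℕ) : ℝ) * p = ((n + 1 : ℕ) : ℝ) by rw [hp]; push_cast; ring]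
    exact Real.rpow_natCast x (n + 1)
  have hpow : x ^ (n - 1) * (1 + x ^ 2) ^ (-p) = (x ^ 2)⁻¹ * (x ^ 2 / (1 + x ^ 2)) ^ p := by
    rw [Real.div_rpow hxx.le h1.le, Real.rpow_neg h1.le, hx2p,
      show x ^ (n + 1) = x ^ (n - 1) * x ^ 2 by rw [← pow_add]; congr 1; omega]
    field_simp
  have heq : -(((n : ℝ) + 1) / (2 * x ^ 2)) = -(p / x ^ 2) := by rw [hp]; ring
  rw [heq, hpow]
  exact mul_le_mul_of_nonneg_left key (by positivity)

/-- Lower bound for the Cauchy mass of the annulus: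
`∫_{a ≤ ‖y‖ ≤ b} p_C ≥ (1/√π)·(Γ((n+1)/2)/Γ(n/2))·√(2/(n+1))·
∫_{(n+1)/(2b²)}^{(n+1)/(2a²)} t^{-1/2} e^{-t} dt`. -/
theorem cauchy_annulus_lower_bound
    (n : ℕ) (hn : 1 ≤ n) (a b : ℝ) (ha : 0 < a) (hab : a < b) :
    (∫ y in {y : EuclideanSpace ℝ (Fin n) | a ≤ ‖y‖ ∧ ‖y‖ ≤ b}, pC n y) ≥
      (1 / Real.sqrt π) * (Real.Gamma (((n : ℝ) + 1) / 2) / Real.Gamma ((n : ℝ) / 2)) *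
        Real.sqrt (2 / ((n : ℝ) + 1)) *
        ∫ t in (((n : ℝ) + 1) / (2 * b ^ 2))..(((n : ℝ) + 1) / (2 * a ^ 2)),
          t ^ (-(1 : ℝ) / 2) * Real.exp (-t) := by
  have hb : 0 < b := ha.trans hab
  have hn1 : (0 : ℝ) < (n : ℝ) + 1 := by positivity
  haveI : Nonempty (Fin n) := ⟨⟨0, hn⟩⟩
  haveI : Nontrivial (EuclideanSpace ℝ (Fin n)) := by
    apply Module.nontrivial_of_finrank_pos (R := ℝ)
    rw [finrank_euclideanSpace_fin]; omega
  set K : ℝ := Real.Gamma (((n : ℝ) + 1) / 2) / π ^ (((n : ℝ) + 1) / 2) with hK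
  set g : ℝ → ℝ := fun t => t ^ (-(1 : ℝ) / 2) * Real.exp (-t) with hg
  set φ : ℝ → ℝ := fun r => ((n : ℝ) + 1) / (2 * r ^ 2) with hφ
  set f : ℝ → ℝ := Set.indicator (Set.Icc a b) (fun r => K * (1 + r ^ 2) ^ (-(((n : ℝ) + 1) / 2))) with hf
  -- Step 1: LHS as an integral over all of ℝⁿ of a radial function
  have hSm : MeasurableSet {y : EuclideanSpace ℝ (Fin n) | a ≤ ‖y‖ ∧ ‖y‖ ≤ b} :=
    measurable_norm measurableSet_Icc
  have step1 : (∫ y in {y : EuclideanSpace ℝ (Fin n) | a ≤ ‖y‖ ∧ ‖y‖ ≤ b}, pC n y)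
      = ∫ y : EuclideanSpace ℝ (Fin n), f ‖y‖ := by
    rw [← integral_indicator hSm]
    have hfun : (Set.indicator {y : EuclideanSpace ℝ (Fin n) | a ≤ ‖y‖ ∧ ‖y‖ ≤ b} (pC n))
        = fun y => f ‖y‖ := by
      funext y
      by_cases h : ‖y‖ ∈ Set.Icc a b
      · rw [Set.indicator_of_mem (by exact h) (pC n), hf, Set.indicator_of_mem h]
        rfl
      · rw [Set.indicator_of_notMem (by exact h) (pC n), hf, Set.indicator_of_notMem h]
    rw [hfun]
  -- Step 2: polar coordinates
  have step2 : (∫ y : EuclideanSpace ℝ (Fin n), f ‖y‖)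
      = n * (Real.sqrt π ^ n / Real.Gamma ((n : ℝ) / 2 + 1)) *
        ∫ r in a..b, r ^ (n - 1) * (K * (1 + r ^ 2) ^ (-(((n : ℝ) + 1) / 2))) := by
    rw [integral_fun_norm_addHaar (volume : Measure (EuclideanSpace ℝ (Fin n))) f]
    rw [nsmul_eq_mul, smul_eq_mul, finrank_euclideanSpace_fin]
    have hvol : (volume (Metric.ball (0 : EuclideanSpace ℝ (Fin n)) 1)).toReal
        = Real.sqrt π ^ n / Real.Gamma ((n : ℝ) / 2 + 1) := by
      rw [EuclideanSpace.volume_ball]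
      simp only [Fintype.card_fin, ENNReal.ofReal_one, one_pow, one_mul]
      rw [ENNReal.toReal_ofReal]
      have : 0 < Real.Gamma ((n : ℝ) / 2 + 1) := Real.Gamma_pos_of_pos (by positivity)
      positivity
    rw [measureReal_def, hvol]
    have hinner : (∫ r in Set.Ioi (0 : ℝ), r ^ (n - 1) • f r)
        = ∫ r in a..b, r ^ (n - 1) * (K * (1 + r ^ 2) ^ (-(((n : ℝ) + 1) / 2))) := by
      have h1 : (fun r : ℝ => r ^ (n - 1) • f r) =
          Set.indicator (Set.Icc a b)
            (fun r => r ^ (n - 1) * (K * (1 + r ^ 2) ^ (-(((n : ℝ) + 1) / 2)))) := by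
        funext r
        by_cases h : r ∈ Set.Icc a b
        · rw [smul_eq_mul, hf, Set.indicator_of_mem h, Set.indicator_of_mem h]
        · rw [smul_eq_mul, hf, Set.indicator_of_notMem h, Set.indicator_of_notMem h, mul_zero]
      have hsub : Set.Icc a b ⊆ Set.Ioi (0 : ℝ) := fun x hx => lt_of_lt_of_le ha hx.1
      rw [h1, setIntegral_indicator measurableSet_Icc,
        Set.inter_eq_self_of_subset_right hsub,
        integral_Icc_eq_integral_Ioc, ← intervalIntegral.integral_of_le hab.le]
    rw [hinner]; ring
  -- Step 3: substitution in the RHS integral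
  have huIcc : Set.uIcc b a = Set.Icc a b := Set.uIcc_of_ge hab.le
  have hderiv : ∀ x ∈ Set.uIcc b a, HasDerivAt φ (-((n : ℝ) + 1) / x ^ 3) x := by
    intro x hx
    rw [huIcc] at hx
    have hx0 : 0 < x := lt_of_lt_of_le ha hx.1
    have h2 : HasDerivAt (fun y : ℝ => 2 * y ^ 2) (2 * (2 * x)) x := by
      simpa using (hasDerivAt_pow 2 x).const_mul 2
    have h3 := (h2.inv (by positivity)).const_mul ((n : ℝ) + 1)
    have hfun : φ = fun y : ℝ => ((n : ℝ) + 1) * (2 * y ^ 2)⁻¹ := by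
      funext y
      show ((n : ℝ) + 1) / (2 * y ^ 2) = ((n : ℝ) + 1) * (2 * y ^ 2)⁻¹
      rw [div_eq_mul_inv]
    rw [hfun]
    refine h3.congr_deriv ?_
    have hx3 : x ≠ 0 := hx0.ne'
    field_simp
  have hgc : ContinuousOn g (Set.Ioi (0 : ℝ)) := by
    apply ContinuousOn.mul
    · exact ContinuousOn.rpow_const continuousOn_id fun x hx => Or.inl (ne_of_gt hx)
    · exact (Real.continuous_exp.comp continuous_neg).continuousOn
  have hφpos : ∀ x ∈ Set.Icc a b, 0 < φ x := by
    intro x hx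
    have hx0 : 0 < x := lt_of_lt_of_le ha hx.1
    rw [hφ]; positivity
  have hgcont : ContinuousOn g (φ '' Set.uIcc b a) := by
    apply hgc.mono
    rintro t ⟨x, hx, rfl⟩
    rw [huIcc] at hx
    exact hφpos x hx
  have hcont' : ContinuousOn (fun x : ℝ => -((n : ℝ) + 1) / x ^ 3) (Set.uIcc b a) := by
    apply ContinuousOn.div continuousOn_const (by fun_prop)
    intro x hx
    rw [huIcc] at hx
    have hx0 : 0 < x := lt_of_lt_of_le ha hx.1
    positivity
  have hsub := intervalIntegral.integral_comp_smul_deriv' hderiv hcont' hgcont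
  have step3 : (∫ t in (φ b)..(φ a), g t) = ∫ x in a..b, (((n : ℝ) + 1) / x ^ 3) * g (φ x) := by
    rw [← hsub, intervalIntegral.integral_symm, ← intervalIntegral.integral_neg]
    congr 1
    funext x
    simp only [Function.comp_apply, smul_eq_mul]
    ring
  -- positivity facts
  have hΓ1 : 0 < Real.Gamma (((n : ℝ) + 1) / 2) := Real.Gamma_pos_of_pos (by positivity)
  have hnpos : (0 : ℝ) < n := by exact_mod_cast hn
  have hΓh : 0 < Real.Gamma ((n : ℝ) / 2) := Real.Gamma_pos_of_pos (by positivity)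
  have hΓ2 : 0 < Real.Gamma ((n : ℝ) / 2 + 1) := Real.Gamma_pos_of_pos (by positivity)
  have hΓadd : Real.Gamma ((n : ℝ) / 2 + 1) = ((n : ℝ) / 2) * Real.Gamma ((n : ℝ) / 2) :=
    Real.Gamma_add_one (by positivity)
  have hπpow : (π : ℝ) ^ (((n : ℝ) + 1) / 2) = Real.sqrt π ^ (n + 1) := by
    rw [Real.sqrt_eq_rpow, ← Real.rpow_natCast (π ^ ((1 : ℝ) / 2)) (n + 1),
      ← Real.rpow_mul pi_pos.le]
    congr 1; push_cast; ring
  have hsπ : 0 < Real.sqrt π := Real.sqrt_pos.mpr pi_pos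
  have hπr : (0 : ℝ) < π ^ (((n : ℝ) + 1) / 2) := Real.rpow_pos_of_pos pi_pos _
  set s : ℝ := Real.sqrt (2 / ((n : ℝ) + 1)) with hs
  have hs2 : s * s = 2 / ((n : ℝ) + 1) := Real.mul_self_sqrt (by positivity)
  set CL : ℝ := ↑n * (Real.sqrt π ^ n / Real.Gamma ((n : ℝ) / 2 + 1)) with hCL
  set c₀ : ℝ := 1 / Real.sqrt π * (Real.Gamma (((n : ℝ) + 1) / 2) / Real.Gamma ((n : ℝ) / 2)) * s
    with hc₀
  have hCLK : 0 ≤ CL * K := by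
    rw [hCL, hK]
    exact mul_nonneg (mul_nonneg (Nat.cast_nonneg n)
      (div_nonneg (pow_nonneg hsπ.le n) hΓ2.le)) (div_nonneg hΓ1.le hπr.le)
  -- pointwise bound
  have hpt : ∀ x ∈ Set.Icc a b,
      c₀ * ((((n : ℝ) + 1) / x ^ 3) * g (φ x)) ≤
        CL * (x ^ (n - 1) * (K * (1 + x ^ 2) ^ (-(((n : ℝ) + 1) / 2)))) := by
    intro x hx
    have hx0 : 0 < x := lt_of_lt_of_le ha hx.1
    have hφx : 0 < φ x := hφpos x hx
    have e1 : (φ x) ^ (-(1 : ℝ) / 2) = x * s := by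
      rw [neg_div, Real.rpow_neg hφx.le, ← Real.sqrt_eq_rpow, ← Real.sqrt_inv]
      have e2 : (φ x)⁻¹ = x ^ 2 * (2 / ((n : ℝ) + 1)) := by
        rw [hφ]
        show (((n : ℝ) + 1) / (2 * x ^ 2))⁻¹ = _
        rw [inv_div]; ring
      rw [e2, Real.sqrt_mul (sq_nonneg x), Real.sqrt_sq hx0.le, hs]
    have e3 : g (φ x) = x * s * Real.exp (-φ x) := by
      rw [hg]
      show (φ x) ^ (-(1 : ℝ) / 2) * Real.exp (-φ x) = _
      rw [e1]
    rw [e3]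
    have hconst : c₀ * (((n : ℝ) + 1) / x ^ 3 * (x * s)) = CL * K * (x ^ 2)⁻¹ := by
      have lhs1 : c₀ * (((n : ℝ) + 1) / x ^ 3 * (x * s)) =
          1 / Real.sqrt π * (Real.Gamma (((n : ℝ) + 1) / 2) / Real.Gamma ((n : ℝ) / 2)) *
            (s * s) * ((n : ℝ) + 1) * (x ^ 2)⁻¹ := by
        rw [hc₀]; field_simp
      rw [lhs1, hs2, hCL, hK, hπpow, hΓadd,
        show Real.sqrt π ^ (n + 1) = Real.sqrt π ^ n * Real.sqrt π by ring]
      field_simp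
    calc c₀ * (((n : ℝ) + 1) / x ^ 3 * (x * s * Real.exp (-φ x)))
        = c₀ * (((n : ℝ) + 1) / x ^ 3 * (x * s)) * Real.exp (-φ x) := by ring
      _ = CL * K * ((x ^ 2)⁻¹ * Real.exp (-φ x)) := by rw [hconst]; ring
      _ ≤ CL * K * (x ^ (n - 1) * (1 + x ^ 2) ^ (-(((n : ℝ) + 1) / 2))) :=
          mul_le_mul_of_nonneg_left (key_ineq n hn hx0) hCLK
      _ = CL * (x ^ (n - 1) * (K * (1 + x ^ 2) ^ (-(((n : ℝ) + 1) / 2)))) := by ring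
  -- integrability
  have huab : Set.uIcc a b = Set.Icc a b := Set.uIcc_of_le hab.le
  have hφcont : ContinuousOn φ (Set.uIcc a b) := by
    rw [huab]
    apply ContinuousOn.div continuousOn_const (by fun_prop)
    intro x hx
    have hx0 : 0 < x := lt_of_lt_of_le ha hx.1
    positivity
  have hint1 : IntervalIntegrable
      (fun x => c₀ * ((((n : ℝ) + 1) / x ^ 3) * g (φ x))) volume a b := by
    apply ContinuousOn.intervalIntegrable
    apply ContinuousOn.mul continuousOn_const
    apply ContinuousOn.mul
    · apply ContinuousOn.div continuousOn_const (by fun_prop)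
      intro x hx
      rw [huab] at hx
      have hx0 : 0 < x := lt_of_lt_of_le ha hx.1
      positivity
    · apply hgc.comp hφcont
      intro x hx
      rw [huab] at hx
      exact hφpos x hx
  have hint2 : IntervalIntegrable
      (fun r => CL * (r ^ (n - 1) * (K * (1 + r ^ 2) ^ (-(((n : ℝ) + 1) / 2))))) volume a b := by
    apply ContinuousOn.intervalIntegrable
    apply ContinuousOn.mul continuousOn_const
    apply ContinuousOn.mul (by fun_prop)
    apply ContinuousOn.mul continuousOn_const
    apply ContinuousOn.rpow_const (by fun_prop)
    intro x hx
    left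
    positivity
  rw [ge_iff_le, step1, step2,
    show (((n : ℝ) + 1) / (2 * b ^ 2)) = φ b from rfl,
    show (((n : ℝ) + 1) / (2 * a ^ 2)) = φ a from rfl, step3,
    ← intervalIntegral.integral_const_mul, ← intervalIntegral.integral_const_mul]
  exact intervalIntegral.integral_mono_on hab.le hint1 hint2 hpt
end
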